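/- Assume κ ≥ 0 and the gain-ratio condition K_d^gsc / K_θ^gsc = K_d^msc / K_θ^msc. Then every solution x : [0,∞) → ℝ⁶ of the linearized closed-loop wind-turbine/grid model is bounded: there exists R > 0 (depending on the initial condition) such that ‖x(t)‖ ≤ R for all t ≥ 0; in particular V(x(t)) ≤ V(x(0)) for all t ≥ 0. -/

import Mathlib

/-- A solution of the linearized closed-loop wind-turbine/grid model with state
`x = (ρ₁, ρ₂, ω₁, ω₂, v, P)` (indices `0,…,5`). -/
def IsSolution (Kdg Kdm Kθg Kθm bg bmsc Jg Jwt ω0 ωdel Cdc Tg kg κ : ℝ)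
    (x : ℝ → EuclideanSpace ℝ (Fin 6)) : Prop :=
  ∀ t : ℝ, 0 ≤ t →
    HasDerivAt (fun s => x s 0)
      (-(Kdg / Cdc) * (bg * x t 0 + bmsc * x t 1) - x t 2 + Kθg * x t 4) t ∧
    HasDerivAt (fun s => x s 1)
      (-(Kdm / Cdc) * (bg * x t 0 + bmsc * x t 1) - x t 3 + Kθm * x t 4) t ∧
    HasDerivAt (fun s => x s 2) ((bg * x t 0 + x t 5) / (Jg * ω0)) t ∧
    HasDerivAt (fun s => x s 3) ((bmsc * x t 1 - κ * x t 3) / (Jwt * ωdel)) t ∧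
    HasDerivAt (fun s => x s 4) (-(bg * x t 0 + bmsc * x t 1) / Cdc) t ∧
    HasDerivAt (fun s => x s 5) ((-kg * x t 2 - x t 5) / Tg) t

/-- The LaSalle function `V`. -/
noncomputable def lasalleV (Kθg Kθm bg bmsc Jg Jwt ω0 ωdel Cdc Tg kg : ℝ)
    (x : EuclideanSpace ℝ (Fin 6)) : ℝ :=
  (1 / 2) * ((bg / Kθg) * (x 0) ^ 2 + (bmsc / Kθm) * (x 1) ^ 2 +
    (Jg * ω0 / Kθg) * (x 2) ^ 2 + (Jwt * ωdel / Kθm) * (x 3) ^ 2 +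
    Cdc * (x 4) ^ 2 + (Tg / (Kθg * kg)) * (x 5) ^ 2)

lemma lasalle_alg (r1 r2 w1 w2 v p bg bm Jg Jwt ω0 ωdel Cdc Tg kg Kθg Kθm Kdg Kdm κ : ℝ)
    (hJg : Jg ≠ 0) (hJwt : Jwt ≠ 0) (hω0 : ω0 ≠ 0) (hωdel : ωdel ≠ 0)
    (hCdc : Cdc ≠ 0) (hTg : Tg ≠ 0) (hkg : kg ≠ 0) (hKθg : Kθg ≠ 0) (hKθm : Kθm ≠ 0)
    (hr : Kdg * Kθm = Kdm * Kθg) :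
    (1/2)*( (bg/Kθg)*(2*r1^1*(-(Kdg/Cdc)*(bg*r1+bm*r2) - w1 + Kθg*v))
      + (bm/Kθm)*(2*r2^1*(-(Kdm/Cdc)*(bg*r1+bm*r2) - w2 + Kθm*v))
      + (Jg*ω0/Kθg)*(2*w1^1*((bg*r1+p)/(Jg*ω0)))
      + (Jwt*ωdel/Kθm)*(2*w2^1*((bm*r2-κ*w2)/(Jwt*ωdel)))
      + Cdc*(2*v^1*(-(bg*r1+bm*r2)/Cdc))
      + (Tg/(Kθg*kg))*(2*p^1*((-kg*w1-p)/Tg)) )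
    = -(Kdg/(Kθg*Cdc))*(bg*r1+bm*r2)^2 - (κ/Kθm)*w2^2 - p^2/(Kθg*kg) := by
  field_simp
  linear_combination (bm*r2*(bg*r1+bm*r2)*kg) * hr

/-- **Boundedness of trajectories.** If `κ ≥ 0` and
`K_d^gsc / K_θ^gsc = K_d^msc / K_θ^msc`, every solution of the linearized model
is bounded on `[0, ∞)`, and `V(x(t)) ≤ V(x(0))` for all `t ≥ 0`. -/
theorem solutions_bounded
    (bg bmsc Jg Jwt ω0 ωdel Cdc Tg kg Kθg Kθm Kdg Kdm Kωr Kβ Kp : ℝ)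
    (hbg : 0 < bg) (hbmsc : 0 < bmsc) (hJg : 0 < Jg) (hJwt : 0 < Jwt)
    (hω0 : 0 < ω0) (hωdel : 0 < ωdel) (hCdc : 0 < Cdc) (hTg : 0 < Tg)
    (hkg : 0 < kg) (hKθg : 0 < Kθg) (hKθm : 0 < Kθm)
    (hKdg : 0 < Kdg) (hKdm : 0 < Kdm)
    (hκ : 0 ≤ Kωr + Kβ * Kp)
    (hratio : Kdg / Kθg = Kdm / Kθm)
    (x : ℝ → EuclideanSpace ℝ (Fin 6))
    (hx : IsSolution Kdg Kdm Kθg Kθm bg bmsc Jg Jwt ω0 ωdel Cdc Tg kg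
      (Kωr + Kβ * Kp) x) :
    (∃ R : ℝ, 0 < R ∧ ∀ t : ℝ, 0 ≤ t → ‖x t‖ ≤ R) ∧
    (∀ t : ℝ, 0 ≤ t →
      lasalleV Kθg Kθm bg bmsc Jg Jwt ω0 ωdel Cdc Tg kg (x t) ≤
        lasalleV Kθg Kθm bg bmsc Jg Jwt ω0 ωdel Cdc Tg kg (x 0)) := by
  have hr : Kdg * Kθm = Kdm * Kθg := by
    field_simp at hratio; linarith
  set κ := Kωr + Kβ * Kp with hκdef
  set W : ℝ → ℝ := fun s => lasalleV Kθg Kθm bg bmsc Jg Jwt ω0 ωdel Cdc Tg kg (x s) with hW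
  -- derivative of W
  have hderiv : ∀ t : ℝ, 0 ≤ t → HasDerivAt W
      (-(Kdg/(Kθg*Cdc))*(bg * x t 0 + bmsc * x t 1)^2 - (κ/Kθm)*(x t 3)^2
        - (x t 5)^2/(Kθg*kg)) t := by
    intro t ht
    obtain ⟨h0, h1, h2, h3, h4, h5⟩ := hx t ht
    have g0 := (h0.pow 2).const_mul (bg/Kθg)
    have g1 := (h1.pow 2).const_mul (bmsc/Kθm)
    have g2 := (h2.pow 2).const_mul (Jg*ω0/Kθg)
    have g3 := (h3.pow 2).const_mul (Jwt*ωdel/Kθm)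
    have g4 := (h4.pow 2).const_mul Cdc
    have g5 := (h5.pow 2).const_mul (Tg/(Kθg*kg))
    have H := (((((g0.add g1).add g2).add g3).add g4).add g5).const_mul (1/2 : ℝ)
    have hEq := lasalle_alg (x t 0) (x t 1) (x t 2) (x t 3) (x t 4) (x t 5)
      bg bmsc Jg Jwt ω0 ωdel Cdc Tg kg Kθg Kθm Kdg Kdm κ
      hJg.ne' hJwt.ne' hω0.ne' hωdel.ne' hCdc.ne' hTg.ne' hkg.ne' hKθg.ne' hKθm.ne' hr
    have H' : HasDerivAt (fun s => (1/2 : ℝ) * ((bg / Kθg) * (x s 0) ^ 2 +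
        (bmsc / Kθm) * (x s 1) ^ 2 + (Jg * ω0 / Kθg) * (x s 2) ^ 2 +
        (Jwt * ωdel / Kθm) * (x s 3) ^ 2 + Cdc * (x s 4) ^ 2 +
        (Tg / (Kθg * kg)) * (x s 5) ^ 2))
        (-(Kdg/(Kθg*Cdc))*(bg * x t 0 + bmsc * x t 1)^2 - (κ/Kθm)*(x t 3)^2
          - (x t 5)^2/(Kθg*kg)) t := by
      refine H.congr_deriv ?_
      rw [← hEq]; push_cast; ring
    exact H'
  -- V nonincreasing
  have hmono : AntitoneOn W (Set.Ici (0:ℝ)) := by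
    apply antitoneOn_of_deriv_nonpos (convex_Ici 0)
    · exact fun t ht => (hderiv t ht).continuousAt.continuousWithinAt
    · intro t ht
      rw [interior_Ici] at ht
      exact (hderiv t (le_of_lt ht)).differentiableAt.differentiableWithinAt
    · intro t ht
      rw [interior_Ici] at ht
      rw [(hderiv t (le_of_lt ht)).deriv]
      have h1 : 0 ≤ (Kdg/(Kθg*Cdc))*(bg * x t 0 + bmsc * x t 1)^2 := by positivity
      have h2 : 0 ≤ (κ/Kθm)*(x t 3)^2 := by positivity
      have h3 : 0 ≤ (x t 5)^2/(Kθg*kg) := by positivity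
      linarith
  have hVle : ∀ t : ℝ, 0 ≤ t → W t ≤ W 0 :=
    fun t ht => hmono (Set.self_mem_Ici) ht ht
  refine ⟨?_, hVle⟩
  -- boundedness
  set a0 := bg/Kθg; set a1 := bmsc/Kθm; set a2 := Jg*ω0/Kθg
  set a3 := Jwt*ωdel/Kθm; set a4 := Cdc; set a5 := Tg/(Kθg*kg)
  set m := ((((a0 ⊓ a1) ⊓ a2) ⊓ a3) ⊓ a4) ⊓ a5 with hm
  have hm0 : m ≤ a0 := le_trans (min_le_left _ _) (le_trans (min_le_left _ _)
    (le_trans (min_le_left _ _) (le_trans (min_le_left _ _) (min_le_left _ _))))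
  have hm1 : m ≤ a1 := le_trans (min_le_left _ _) (le_trans (min_le_left _ _)
    (le_trans (min_le_left _ _) (le_trans (min_le_left _ _) (min_le_right _ _))))
  have hm2 : m ≤ a2 := le_trans (min_le_left _ _) (le_trans (min_le_left _ _)
    (le_trans (min_le_left _ _) (min_le_right _ _)))
  have hm3 : m ≤ a3 := le_trans (min_le_left _ _) (le_trans (min_le_left _ _)
    (min_le_right _ _))
  have hm4 : m ≤ a4 := le_trans (min_le_left _ _) (min_le_right _ _)
  have hm5 : m ≤ a5 := min_le_right _ _
  have hmpos : 0 < m := by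
    refine lt_min (lt_min (lt_min (lt_min (lt_min ?_ ?_) ?_) ?_) ?_) ?_ <;> positivity
  have hnormsq : ∀ y : EuclideanSpace ℝ (Fin 6),
      ‖y‖^2 = (y 0)^2 + (y 1)^2 + (y 2)^2 + (y 3)^2 + (y 4)^2 + (y 5)^2 := by
    intro y
    rw [EuclideanSpace.norm_eq, Real.sq_sqrt (by positivity)]
    simp [Fin.sum_univ_six, Real.norm_eq_abs, sq_abs]
  have hkey : ∀ t : ℝ, 0 ≤ t → m * ‖x t‖^2 ≤ 2 * W 0 := by
    intro t ht
    have h1 := hVle t ht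
    have h2 : m * ‖x t‖^2 ≤ 2 * W t := by
      rw [hnormsq]
      have e : W t = (1 / 2) * (a0 * (x t 0) ^ 2 + a1 * (x t 1) ^ 2 +
          a2 * (x t 2) ^ 2 + a3 * (x t 3) ^ 2 + a4 * (x t 4) ^ 2 +
          a5 * (x t 5) ^ 2) := rfl
      rw [e]
      have b0 : m * (x t 0)^2 ≤ a0 * (x t 0)^2 := mul_le_mul_of_nonneg_right hm0 (sq_nonneg _)
      have b1 : m * (x t 1)^2 ≤ a1 * (x t 1)^2 := mul_le_mul_of_nonneg_right hm1 (sq_nonneg _)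
      have b2 : m * (x t 2)^2 ≤ a2 * (x t 2)^2 := mul_le_mul_of_nonneg_right hm2 (sq_nonneg _)
      have b3 : m * (x t 3)^2 ≤ a3 * (x t 3)^2 := mul_le_mul_of_nonneg_right hm3 (sq_nonneg _)
      have b4 : m * (x t 4)^2 ≤ a4 * (x t 4)^2 := mul_le_mul_of_nonneg_right hm4 (sq_nonneg _)
      have b5 : m * (x t 5)^2 ≤ a5 * (x t 5)^2 := mul_le_mul_of_nonneg_right hm5 (sq_nonneg _)
      linarith
    linarith
  have hM : 0 ≤ W 0 := by
    have e : W 0 = (1 / 2) * (a0 * (x 0 0) ^ 2 + a1 * (x 0 1) ^ 2 +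
        a2 * (x 0 2) ^ 2 + a3 * (x 0 3) ^ 2 + a4 * (x 0 4) ^ 2 +
        a5 * (x 0 5) ^ 2) := rfl
    rw [e]
    have := hmpos
    positivity
  refine ⟨Real.sqrt (2 * W 0 / m) + 1, by positivity, fun t ht => ?_⟩
  have hsq : ‖x t‖^2 ≤ 2 * W 0 / m := by
    rw [le_div_iff₀ hmpos]
    linarith [hkey t ht]
  have : ‖x t‖ ≤ Real.sqrt (2 * W 0 / m) := by
    rw [show ‖x t‖ = Real.sqrt (‖x t‖^2) by rw [Real.sqrt_sq (norm_nonneg _)]]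
    exact Real.sqrt_le_sqrt hsq
  linarith
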